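/- Let K : (-∞, 0] → ℝ be continuous with K(r) ≤ 0 for all r ≤ 0. Then there exists a twice continuously differentiable function h : (-∞, 0] → ℝ with h''(r) + K(r)h(r) = 0 for all r ≤ 0, h(0) = 1, 0 < h(r) ≤ 1 for all r ≤ 0, and h'(0) ≥ 0. -/

import Mathlib

open MeasureTheory intervalIntegral Set Filter Topology


lemma integral_tsub_mul_pow (t : ℝ) (m : ℕ) :
    ∫ s in (0:ℝ)..t, (t - s) * s ^ m = t ^ (m + 2) / ((m + 1) * (m + 2)) := by
  have hsplit : (fun s : ℝ => (t - s) * s ^ m) =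
      fun s => t * s ^ m - s ^ (m + 1) := by
    funext s; ring
  rw [hsplit, intervalIntegral.integral_sub (f := fun s => t * s ^ m) (g := fun s => s ^ (m + 1))
      ((continuous_const.mul (continuous_pow m)).intervalIntegrable 0 t)
      ((continuous_pow (m+1)).intervalIntegrable 0 t),
    intervalIntegral.integral_const_mul, integral_pow, integral_pow]
  have h1 : ((m : ℝ) + 1) ≠ 0 := by positivity
  have h2 : ((m : ℝ) + 2) ≠ 0 := by positivity
  field_simp
  push_cast
  ring

noncomputable section JacobiAux

/-- Iterated Volterra integrands for `u'' = q u`, `u 0 = 1`, `u' 0 = 0`. -/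
def vIter (q : ℝ → ℝ) : ℕ → ℝ → ℝ
  | 0 => fun _ => 1
  | n+1 => fun t => ∫ s in (0:ℝ)..t, (t - s) * (q s * vIter q n s)

variable {q : ℝ → ℝ}

lemma vIter_cont (hq : Continuous q) : ∀ n, Continuous (vIter q n) := by
  intro n
  induction n with
  | zero => exact continuous_const
  | succ n ih =>
      have hf : Continuous fun s => q s * vIter q n s := hq.mul ih
      have h1 : Continuous fun t => ∫ s in (0:ℝ)..t, q s * vIter q n s :=
        intervalIntegral.continuous_primitive (fun a b => hf.intervalIntegrable a b) 0
      have h2 : Continuous fun t => ∫ s in (0:ℝ)..t, s * (q s * vIter q n s) :=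
        intervalIntegral.continuous_primitive
          (fun a b => (continuous_id'.mul hf).intervalIntegrable a b) 0
      have key : vIter q (n+1) = fun t =>
          t * (∫ s in (0:ℝ)..t, q s * vIter q n s) -
            ∫ s in (0:ℝ)..t, s * (q s * vIter q n s) := by
        funext t
        show (∫ s in (0:ℝ)..t, (t - s) * (q s * vIter q n s)) = _
        have hsplit : (fun s => (t - s) * (q s * vIter q n s)) =
            fun s => t * (q s * vIter q n s) - s * (q s * vIter q n s) := by
          funext s; ring
        rw [hsplit, intervalIntegral.integral_sub (f := fun s => t * (q s * vIter q n s))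
          (g := fun s => s * (q s * vIter q n s))
          ((continuous_const.mul hf).intervalIntegrable 0 t)
          ((continuous_id'.mul hf).intervalIntegrable 0 t),
          intervalIntegral.integral_const_mul]
      rw [key]
      exact (continuous_id.mul h1).sub h2

lemma vIter_nonneg (hq : Continuous q) (hq0 : ∀ s, 0 ≤ q s) : ∀ n t, 0 ≤ vIter q n t := by
  intro n
  induction n with
  | zero => intro t; exact zero_le_one
  | succ n ih =>
      intro t
      rcases le_total 0 t with ht | ht
      · refine intervalIntegral.integral_nonneg ht fun s hs => ?_
        exact mul_nonneg (by linarith [hs.2]) (mul_nonneg (hq0 s) (ih s))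
      · show 0 ≤ ∫ s in (0:ℝ)..t, (t - s) * (q s * vIter q n s)
        rw [intervalIntegral.integral_symm]
        have : (∫ s in t..(0:ℝ), (t - s) * (q s * vIter q n s)) ≤ 0 := by
          have := intervalIntegral.integral_nonneg (μ := volume)
            (f := fun s => -((t - s) * (q s * vIter q n s)))
            ht (fun s hs => by
              have h1 : 0 ≤ q s * vIter q n s := mul_nonneg (hq0 s) (ih s)
              have h2 : (t - s) * (q s * vIter q n s) ≤ 0 :=
                mul_nonpos_of_nonpos_of_nonneg (by linarith [hs.1]) h1
              simpa using h2)
          rw [intervalIntegral.integral_neg] at this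
          linarith
        linarith






/-- The iterated integrands satisfy the factorial bound on `[-T, T]`. -/
lemma vIter_le (hq : Continuous q) (hq0 : ∀ s, 0 ≤ q s) {T Q : ℝ} (hQ0 : 0 ≤ Q)
    (hQ : ∀ s, |s| ≤ T → q s ≤ Q) :
    ∀ n t, |t| ≤ T → vIter q n t ≤ Q ^ n * t ^ (2*n) / (Nat.factorial (2*n) : ℝ) := by
  intro n
  induction n with
  | zero => intro t _; simp [vIter]
  | succ n ih =>
      intro t ht
      have hcont : Continuous fun s => q s * vIter q n s := hq.mul (vIter_cont hq n)
      have hPhiEq : ∀ u : ℝ,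
          (∫ s in (0:ℝ)..u, (u - s) * (Q * (Q ^ n * s ^ (2*n) / (Nat.factorial (2*n) : ℝ))))
            = Q ^ (n+1) * u ^ (2*(n+1)) / (Nat.factorial (2*(n+1)) : ℝ) := by
        intro u
        have : (fun s : ℝ => (u - s) * (Q * (Q ^ n * s ^ (2*n) / (Nat.factorial (2*n) : ℝ))))
            = fun s => (Q * Q ^ n / (Nat.factorial (2*n) : ℝ)) * ((u - s) * s ^ (2*n)) := by
          funext s; ring
        rw [this, intervalIntegral.integral_const_mul, integral_tsub_mul_pow]
        have hfac : (Nat.factorial (2*(n+1)) : ℝ)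
            = ((2*n : ℕ) + 2) * (((2*n : ℕ) + 1) * (Nat.factorial (2*n) : ℝ)) := by
          rw [show 2*(n+1) = (2*n+1)+1 by ring, Nat.factorial_succ, Nat.factorial_succ]
          push_cast; ring
        have hne : (Nat.factorial (2*n) : ℝ) ≠ 0 := by
          exact_mod_cast (Nat.factorial_pos (2*n)).ne'
        have h1 : ((2*n : ℕ) : ℝ) + 1 ≠ 0 := by positivity
        have h2 : ((2*n : ℕ) : ℝ) + 2 ≠ 0 := by positivity
        rw [show 2*(n+1) = 2*n + 2 by ring] at *
        rw [hfac]
        push_cast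
        field_simp
        ring
      have hphi_nonneg : ∀ s : ℝ, 0 ≤ Q ^ n * s ^ (2*n) / (Nat.factorial (2*n) : ℝ) := by
        intro s
        have : 0 ≤ s ^ (2*n) := by rw [pow_mul]; positivity
        positivity
      rcases le_total 0 t with ht0 | ht0
      · show (∫ s in (0:ℝ)..t, (t - s) * (q s * vIter q n s)) ≤ _
        calc (∫ s in (0:ℝ)..t, (t - s) * (q s * vIter q n s))
            ≤ ∫ s in (0:ℝ)..t,
                (t - s) * (Q * (Q ^ n * s ^ (2*n) / (Nat.factorial (2*n) : ℝ))) := by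
              refine intervalIntegral.integral_mono_on ht0
                (((continuous_const.sub continuous_id').mul hcont).intervalIntegrable 0 t)
                (((continuous_const.sub continuous_id').mul
                  ((continuous_const.mul ((continuous_const.mul (continuous_pow (2*n))).div_const
                    _)))).intervalIntegrable 0 t) fun s hs => ?_
              have hsT : |s| ≤ T := by
                rw [abs_le]; constructor
                · linarith [hs.1, abs_nonneg t, neg_abs_le t, ht]
                · linarith [hs.2, le_abs_self t, ht]
              have hv := ih s hsT
              have hqs := hQ s hsT
              have hmul : q s * vIter q n s
                  ≤ Q * (Q ^ n * s ^ (2*n) / (Nat.factorial (2*n) : ℝ)) :=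
                mul_le_mul hqs hv (vIter_nonneg hq hq0 n s) hQ0
              exact mul_le_mul_of_nonneg_left hmul (by linarith [hs.2])
          _ = _ := hPhiEq t
      · show (∫ s in (0:ℝ)..t, (t - s) * (q s * vIter q n s)) ≤ _
        rw [intervalIntegral.integral_symm]
        have hmono : (∫ s in t..(0:ℝ),
              (t - s) * (Q * (Q ^ n * s ^ (2*n) / (Nat.factorial (2*n) : ℝ))))
            ≤ ∫ s in t..(0:ℝ), (t - s) * (q s * vIter q n s) := by
          refine intervalIntegral.integral_mono_on ht0
            (((continuous_const.sub continuous_id').mul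
              ((continuous_const.mul ((continuous_const.mul (continuous_pow (2*n))).div_const
                _)))).intervalIntegrable t 0)
            (((continuous_const.sub continuous_id').mul hcont).intervalIntegrable t 0)
            fun s hs => ?_
          have hsT : |s| ≤ T := by
            rw [abs_le]; constructor
            · linarith [hs.1, abs_nonneg t, neg_abs_le t, ht]
            · linarith [hs.2, abs_nonneg t, ht]
          have hmul : q s * vIter q n s
              ≤ Q * (Q ^ n * s ^ (2*n) / (Nat.factorial (2*n) : ℝ)) :=
            mul_le_mul (hQ s hsT) (ih s hsT) (vIter_nonneg hq hq0 n s) hQ0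
          exact mul_le_mul_of_nonpos_left hmul (by linarith [hs.1])
        have hsym : (∫ s in t..(0:ℝ),
              (t - s) * (Q * (Q ^ n * s ^ (2*n) / (Nat.factorial (2*n) : ℝ))))
            = - (Q ^ (n+1) * t ^ (2*(n+1)) / (Nat.factorial (2*(n+1)) : ℝ)) := by
          rw [intervalIntegral.integral_symm, hPhiEq t]
        linarith [hmono, hsym.symm.le, hsym.le]








lemma exists_q_bound (hq : Continuous q) (T : ℝ) :
    ∃ Q, 0 ≤ Q ∧ ∀ s, |s| ≤ T → q s ≤ Q := by
  obtain ⟨C, hC⟩ := (isCompact_Icc (a := -T) (b := T)).exists_bound_of_continuousOn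
    hq.continuousOn
  exact ⟨max C 0, le_max_right _ _, fun s hs => by
    have := hC s (abs_le.1 hs)
    calc q s ≤ ‖q s‖ := le_abs_self _
      _ ≤ C := this
      _ ≤ max C 0 := le_max_left _ _⟩

def bnd (Q T : ℝ) (n : ℕ) : ℝ := Q ^ n * T ^ (2*n) / (Nat.factorial (2*n) : ℝ)

lemma bnd_nonneg {Q T : ℝ} (hQ : 0 ≤ Q) (hT : 0 ≤ T) (n : ℕ) : 0 ≤ bnd Q T n := by
  unfold bnd; positivity

lemma summable_bnd {Q T : ℝ} (hQ : 0 ≤ Q) (hT : 0 ≤ T) : Summable (bnd Q T) := by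
  refine Summable.of_nonneg_of_le (bnd_nonneg hQ hT) (fun n => ?_)
    (Real.summable_pow_div_factorial (Q * T^2))
  unfold bnd
  have hnum : Q ^ n * T ^ (2*n) = (Q * T^2) ^ n := by
    rw [mul_pow, pow_mul]
  rw [hnum]
  have h1 : (0:ℝ) < (Nat.factorial n : ℝ) := by exact_mod_cast Nat.factorial_pos n
  have h2 : (Nat.factorial n : ℝ) ≤ (Nat.factorial (2*n) : ℝ) := by
    exact_mod_cast Nat.factorial_le (by omega)
  exact div_le_div₀ (by positivity) le_rfl h1 h2

lemma vIter_le_bnd (hq : Continuous q) (hq0 : ∀ s, 0 ≤ q s) {T Q : ℝ} (hQ0 : 0 ≤ Q)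
    (hT : 0 ≤ T) (hQ : ∀ s, |s| ≤ T → q s ≤ Q) (n : ℕ) {t : ℝ} (ht : |t| ≤ T) :
    vIter q n t ≤ bnd Q T n := by
  refine (vIter_le hq hq0 hQ0 hQ n t ht).trans ?_
  unfold bnd
  have h1 : (0:ℝ) < (Nat.factorial (2*n) : ℝ) := by exact_mod_cast Nat.factorial_pos (2*n)
  have h2 : t ^ (2*n) ≤ T ^ (2*n) := by
    rw [pow_mul, pow_mul]
    exact pow_le_pow_left₀ (by positivity : (0:ℝ) ≤ t^2)
      (by nlinarith [abs_nonneg t, sq_abs t]) n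
  have h4 : 0 ≤ Q ^ n := pow_nonneg hQ0 n
  exact div_le_div₀ (mul_nonneg h4 (pow_nonneg hT _))
    (mul_le_mul_of_nonneg_left h2 h4) h1 le_rfl

def uFun (q : ℝ → ℝ) : ℝ → ℝ := fun t => ∑' n, vIter q n t

lemma summable_vIter (hq : Continuous q) (hq0 : ∀ s, 0 ≤ q s) (t : ℝ) :
    Summable fun n => vIter q n t := by
  obtain ⟨Q, hQ0, hQ⟩ := exists_q_bound hq |t|
  exact Summable.of_nonneg_of_le (fun n => vIter_nonneg hq hq0 n t)
    (fun n => vIter_le_bnd hq hq0 hQ0 (abs_nonneg t) hQ n le_rfl)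
    (summable_bnd hQ0 (abs_nonneg t))

lemma uFun_continuous (hq : Continuous q) (hq0 : ∀ s, 0 ≤ q s) : Continuous (uFun q) := by
  rw [continuous_iff_continuousAt]
  intro x
  set T := |x| + 1 with hTdef
  have hT : 0 ≤ T := by positivity
  obtain ⟨Q, hQ0, hQ⟩ := exists_q_bound hq T
  have hunif := tendstoUniformlyOn_tsum_nat (f := fun n t => vIter q n t)
    (summable_bnd hQ0 hT) (s := Icc (-T) T) (fun n t htm => by
      rw [Real.norm_eq_abs, abs_of_nonneg (vIter_nonneg hq hq0 n t)]
      exact vIter_le_bnd hq hq0 hQ0 hT hQ n (abs_le.2 htm))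
  have hcont : ContinuousOn (uFun q) (Icc (-T) T) := by
    refine hunif.continuousOn (Frequently.of_forall fun n => ?_)
    exact (continuous_finset_sum _ fun k _ => vIter_cont hq k).continuousOn
  refine hcont.continuousAt (Icc_mem_nhds ?_ ?_) <;>
    [linarith [neg_abs_le x]; linarith [le_abs_self x]]

lemma uFun_zero : uFun q 0 = 1 := by
  unfold uFun
  rw [tsum_eq_single 0 (fun n hn => ?_)]
  · rfl
  · match n, hn with
    | n+1, _ => show (∫ s in (0:ℝ)..(0:ℝ), _) = 0; rw [intervalIntegral.integral_same]

lemma one_le_uFun (hq : Continuous q) (hq0 : ∀ s, 0 ≤ q s) (t : ℝ) : 1 ≤ uFun q t := by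
  have := Summable.le_tsum (summable_vIter hq hq0 t) 0 (fun j _ => vIter_nonneg hq hq0 j t)
  simpa [vIter, uFun] using this








/-- The Volterra integral equation for `uFun`. -/
lemma uFun_integral_eq (hq : Continuous q) (hq0 : ∀ s, 0 ≤ q s) (t : ℝ) :
    uFun q t = 1 + ∫ s in (0:ℝ)..t, (t - s) * (q s * uFun q s) := by
  set T := |t| with hTdef
  have hT : 0 ≤ T := abs_nonneg t
  obtain ⟨Q, hQ0, hQ⟩ := exists_q_bound hq T
  set S : ℕ → ℝ → ℝ := fun n s => ∑ k ∈ Finset.range n, vIter q k s with hSdef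
  have hScont : ∀ n, Continuous (S n) :=
    fun n => continuous_finset_sum _ fun k _ => vIter_cont hq k
  have hS : ∀ x : ℝ, Tendsto (fun n => S n x) atTop (𝓝 (uFun q x)) :=
    fun x => (summable_vIter hq hq0 x).hasSum.tendsto_sum_nat
  have hrec : ∀ n, S (n+1) t = 1 + ∫ s in (0:ℝ)..t, (t - s) * (q s * S n s) := by
    intro n
    have : S (n+1) t = (∑ k ∈ Finset.range n, vIter q (k+1) t) + vIter q 0 t :=
      Finset.sum_range_succ' _ n
    rw [this]
    have hterm : ∀ k, vIter q (k+1) t = ∫ s in (0:ℝ)..t, (t - s) * (q s * vIter q k s) :=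
      fun k => rfl
    have hsum : (∑ k ∈ Finset.range n, vIter q (k+1) t)
        = ∫ s in (0:ℝ)..t, ∑ k ∈ Finset.range n, (t - s) * (q s * vIter q k s) := by
      exact (intervalIntegral.integral_finset_sum (fun k _ =>
        ((continuous_const.sub continuous_id').mul
          (hq.mul (vIter_cont hq k))).intervalIntegrable 0 t)).symm
    rw [hsum]
    have : (fun s => ∑ k ∈ Finset.range n, (t - s) * (q s * vIter q k s))
        = fun s => (t - s) * (q s * S n s) := by
      funext s
      rw [hSdef]
      simp [Finset.mul_sum]
    rw [this]
    show _ = vIter q 0 t + _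
    rw [show vIter q 0 t = 1 from rfl, add_comm]
  -- pass to the limit in `hrec`
  have hB : ∀ n x, |x| ≤ T → |q x * S n x| ≤ Q * tsum (bnd Q T) := by
    intro n x hx
    have h1 : 0 ≤ S n x := Finset.sum_nonneg fun k _ => vIter_nonneg hq hq0 k x
    have h2 : S n x ≤ tsum (bnd Q T) := by
      calc S n x ≤ ∑ k ∈ Finset.range n, bnd Q T k :=
            Finset.sum_le_sum fun k _ => vIter_le_bnd hq hq0 hQ0 hT hQ k hx
        _ ≤ tsum (bnd Q T) := Summable.sum_le_tsum _ (fun k _ => bnd_nonneg hQ0 hT k)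
            (summable_bnd hQ0 hT)
    rw [abs_of_nonneg (mul_nonneg (hq0 x) h1)]
    exact mul_le_mul (hQ x hx) h2 h1 hQ0
  have hlim2 : Tendsto (fun n => 1 + ∫ s in (0:ℝ)..t, (t - s) * (q s * S n s)) atTop
      (𝓝 (1 + ∫ s in (0:ℝ)..t, (t - s) * (q s * uFun q s))) := by
    refine tendsto_const_nhds.add ?_
    refine intervalIntegral.tendsto_integral_filter_of_dominated_convergence
      (fun _ => (2*T) * (Q * tsum (bnd Q T))) ?_ ?_ ?_ ?_
    · exact Eventually.of_forall fun n =>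
        (((continuous_const.sub continuous_id').mul (hq.mul (hScont n))).aestronglyMeasurable)
    · refine Eventually.of_forall fun n => Eventually.of_forall fun x hx => ?_
      have hxT : |x| ≤ T ∧ |t - x| ≤ 2*T := by
        rcases le_total 0 t with h | h
        · rw [uIoc_of_le (by linarith : (0:ℝ) ≤ t)] at hx
          constructor
          · rw [abs_le]; constructor <;> [linarith [hx.1]; exact hx.2.trans (le_abs_self t)]
          · rw [abs_le]
            constructor <;> [nlinarith [le_abs_self t, hx.1, hx.2]; nlinarith [le_abs_self t, hx.1, hx.2]]
        · rw [uIoc_of_ge (by linarith : t ≤ (0:ℝ))] at hx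
          constructor
          · rw [abs_le]; constructor <;> [exact (neg_abs_le t).trans hx.1.le; linarith [hx.2]]
          · rw [abs_le]
            constructor <;> [nlinarith [neg_abs_le t, hx.1, hx.2]; nlinarith [neg_abs_le t, hx.1, hx.2]]
      rw [Real.norm_eq_abs, abs_mul]
      exact mul_le_mul hxT.2 (hB n x hxT.1) (abs_nonneg _)
        (by positivity)
    · exact intervalIntegrable_const
    · refine Eventually.of_forall fun x _ => ?_
      exact (((hS x).const_mul (q x)).const_mul (t - x))
  have hlim1 : Tendsto (fun n => S (n+1) t) atTop (𝓝 (uFun q t)) :=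
    (hS t).comp (tendsto_add_atTop_nat 1)
  rw [funext hrec] at hlim1
  exact tendsto_nhds_unique hlim1 hlim2

def Pfn (q : ℝ → ℝ) : ℝ → ℝ := fun t => ∫ s in (0:ℝ)..t, q s * uFun q s

def Rfn (q : ℝ → ℝ) : ℝ → ℝ := fun t => ∫ s in (0:ℝ)..t, s * (q s * uFun q s)

lemma uFun_eq' (hq : Continuous q) (hq0 : ∀ s, 0 ≤ q s) :
    uFun q = fun t => 1 + (t * Pfn q t - Rfn q t) := by
  funext t
  rw [uFun_integral_eq hq hq0 t]
  unfold Pfn Rfn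
  have hf : Continuous fun s => q s * uFun q s := hq.mul (uFun_continuous hq hq0)
  have hsplit : (fun s : ℝ => (t - s) * (q s * uFun q s))
      = fun s => t * (q s * uFun q s) - s * (q s * uFun q s) := by funext s; ring
  rw [hsplit, intervalIntegral.integral_sub (f := fun s => t * (q s * uFun q s))
    (g := fun s => s * (q s * uFun q s)) ((continuous_const.mul hf).intervalIntegrable 0 t)
    ((continuous_id'.mul hf).intervalIntegrable 0 t), intervalIntegral.integral_const_mul]

lemma hasDerivAt_Pfn (hq : Continuous q) (hq0 : ∀ s, 0 ≤ q s) (t : ℝ) :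
    HasDerivAt (Pfn q) (q t * uFun q t) t := by
  have hf : Continuous fun s => q s * uFun q s := hq.mul (uFun_continuous hq hq0)
  exact intervalIntegral.integral_hasDerivAt_right (hf.intervalIntegrable 0 t)
    (hf.stronglyMeasurable.stronglyMeasurableAtFilter) hf.continuousAt

lemma hasDerivAt_uFun (hq : Continuous q) (hq0 : ∀ s, 0 ≤ q s) (t : ℝ) :
    HasDerivAt (uFun q) (Pfn q t) t := by
  have hf : Continuous fun s => s * (q s * uFun q s) :=
    continuous_id'.mul (hq.mul (uFun_continuous hq hq0))
  have hR : HasDerivAt (Rfn q) (t * (q t * uFun q t)) t :=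
    intervalIntegral.integral_hasDerivAt_right (hf.intervalIntegrable 0 t)
      (hf.stronglyMeasurable.stronglyMeasurableAtFilter) hf.continuousAt
  have h : HasDerivAt (fun t => 1 + (t * Pfn q t - Rfn q t))
      (0 + ((1 * Pfn q t + t * (q t * uFun q t)) - t * (q t * uFun q t))) t :=
    (hasDerivAt_const t 1).add (((hasDerivAt_id t).mul (hasDerivAt_Pfn hq hq0 t)).sub hR)
  rw [uFun_eq' hq hq0]
  convert h using 1
  ring






variable {q : ℝ → ℝ}

def Jfn (q : ℝ → ℝ) : ℝ → ℝ := fun t => ∫ s in (0:ℝ)..t, ((uFun q s) ^ 2)⁻¹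

section basic
variable (hq : Continuous q) (hq0 : ∀ s, 0 ≤ q s)
include hq hq0

lemma uFun_pos (t : ℝ) : 0 < uFun q t := lt_of_lt_of_le one_pos (one_le_uFun hq hq0 t)

lemma uFun_ne (t : ℝ) : uFun q t ≠ 0 := (uFun_pos hq hq0 t).ne'

lemma inv_sq_uFun_cont : Continuous fun s => ((uFun q s) ^ 2)⁻¹ :=
  ((uFun_continuous hq hq0).pow 2).inv₀ fun s => pow_ne_zero 2 (uFun_ne hq hq0 s)

lemma hasDerivAt_Jfn (t : ℝ) : HasDerivAt (Jfn q) (((uFun q t) ^ 2)⁻¹) t :=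
  intervalIntegral.integral_hasDerivAt_right
    ((inv_sq_uFun_cont hq hq0).intervalIntegrable 0 t)
    ((inv_sq_uFun_cont hq hq0).stronglyMeasurable.stronglyMeasurableAtFilter)
    (inv_sq_uFun_cont hq hq0).continuousAt

lemma Jfn_strictMono : StrictMono (Jfn q) := by
  refine strictMono_of_deriv_pos fun t => ?_
  rw [(hasDerivAt_Jfn hq hq0 t).deriv]
  have := uFun_pos hq hq0 t
  positivity

omit hq hq0 in
lemma Pfn_zero : Pfn q 0 = 0 := intervalIntegral.integral_same

omit hq hq0 in
lemma Jfn_zero : Jfn q 0 = 0 := intervalIntegral.integral_same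

lemma Pfn_mono : Monotone (Pfn q) := by
  refine monotone_of_deriv_nonneg (fun t => (hasDerivAt_Pfn hq hq0 t).differentiableAt)
    fun t => ?_
  rw [(hasDerivAt_Pfn hq hq0 t).deriv]
  exact mul_nonneg (hq0 t) (uFun_pos hq hq0 t).le

lemma Pfn_nonneg {t : ℝ} (ht : 0 ≤ t) : 0 ≤ Pfn q t := by
  have := Pfn_mono hq hq0 ht
  rwa [Pfn_zero] at this

/-- tangent line bound: for `s ≥ t ≥ 0`, `u s ≥ u t + P t (s - t)`. -/
lemma uFun_tangent {t s : ℝ} (hts : t ≤ s) :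
    uFun q t + Pfn q t * (s - t) ≤ uFun q s := by
  have hw : ∀ x, HasDerivAt (fun y => uFun q y - Pfn q t * y) (Pfn q x - Pfn q t) x :=
    fun x => (hasDerivAt_uFun hq hq0 x).sub
      (((hasDerivAt_id x).const_mul (Pfn q t)).congr_deriv (mul_one _))
  have hmono : MonotoneOn (fun y => uFun q y - Pfn q t * y) (Ici t) := by
    refine monotoneOn_of_deriv_nonneg (convex_Ici t)
      (fun x _ => ((hw x).continuousAt.continuousWithinAt)) ?_ ?_
    · exact fun x _ => ((hw x).differentiableAt).differentiableWithinAt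
    · intro x hx
      rw [(hw x).deriv]
      rw [interior_Ici] at hx
      exact sub_nonneg.2 (Pfn_mono hq hq0 (le_of_lt hx))
  have := hmono (self_mem_Ici) (mem_Ici.2 hts) hts
  simp only [sub_le_sub_iff] at this
  nlinarith [this]

/-- Key increment bound for `J` when `P t > 0`. -/
lemma Jfn_increment {t T : ℝ} (ht : 0 ≤ t) (htT : t ≤ T) (hP : 0 < Pfn q t) :
    Jfn q T ≤ Jfn q t + (Pfn q t * uFun q t)⁻¹ := by
  set a := Pfn q t with ha
  set c0 := uFun q t with hc0
  have hc0pos : 0 < c0 := uFun_pos hq hq0 t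
  have hglin : ∀ s : ℝ, t ≤ s → (1:ℝ) ≤ c0 + a * (s - t) := fun s hs => by
    nlinarith [one_le_uFun hq hq0 t]
  -- J T - J t = ∫_t^T u⁻²
  have hJdiff : Jfn q T - Jfn q t = ∫ s in t..T, ((uFun q s) ^ 2)⁻¹ := by
    have h := intervalIntegral.integral_add_adjacent_intervals (μ := volume)
      (a := 0) (b := t) (c := T) (f := fun s => ((uFun q s) ^ 2)⁻¹)
      ((inv_sq_uFun_cont hq hq0).intervalIntegrable 0 t)
      ((inv_sq_uFun_cont hq hq0).intervalIntegrable t T)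
    unfold Jfn
    linarith [h]
  have hcontG : ContinuousOn (fun s => ((c0 + a * (s - t)) ^ 2)⁻¹) (uIcc t T) := by
    rw [uIcc_of_le htT]
    refine ((continuous_const.add (continuous_const.mul
      (continuous_id'.sub continuous_const))).pow 2).continuousOn.inv₀ fun s hs => ?_
    exact pow_ne_zero 2 (show c0 + a * (s - t) ≠ 0 by nlinarith [hglin s hs.1])
  have hmono : (∫ s in t..T, ((uFun q s) ^ 2)⁻¹)
      ≤ ∫ s in t..T, ((c0 + a * (s - t)) ^ 2)⁻¹ := by
    refine intervalIntegral.integral_mono_on htT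
      ((inv_sq_uFun_cont hq hq0).intervalIntegrable t T)
      hcontG.intervalIntegrable fun s hs => ?_
    have h1 : c0 + a * (s - t) ≤ uFun q s := uFun_tangent hq hq0 hs.1
    have h2 : (1:ℝ) ≤ c0 + a * (s - t) := hglin s hs.1
    have h3 : (c0 + a * (s - t))^2 ≤ (uFun q s)^2 := by nlinarith
    exact inv_anti₀ (by nlinarith) h3
  have hFTC : (∫ s in t..T, ((c0 + a * (s - t)) ^ 2)⁻¹)
      = -(a⁻¹ * (c0 + a * (T - t))⁻¹) - -(a⁻¹ * (c0 + a * (t - t))⁻¹) := by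
    refine intervalIntegral.integral_eq_sub_of_hasDerivAt
      (f := fun s => -(a⁻¹ * (c0 + a * (s - t))⁻¹))
      (f' := fun s => ((c0 + a * (s - t)) ^ 2)⁻¹) (fun s hs => ?_)
      hcontG.intervalIntegrable
    rw [uIcc_of_le htT] at hs
    have hne : c0 + a * (s - t) ≠ 0 := by nlinarith [hglin s hs.1]
    have hlin : HasDerivAt (fun s : ℝ => c0 + a * (s - t)) a s := by
      simpa using ((hasDerivAt_id s).sub_const t).const_mul a |>.const_add c0
    have hinv : HasDerivAt (fun s : ℝ => (c0 + a * (s - t))⁻¹)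
        (-a / (c0 + a * (s - t)) ^ 2) s := hlin.inv hne
    have := hinv.const_mul a⁻¹ |>.neg
    convert this using 1
    field_simp
    rfl
    rw [neg_div, mul_neg, neg_neg, mul_div_assoc', inv_mul_cancel₀ hP.ne', one_div]
  have hval : -(a⁻¹ * (c0 + a * (T - t))⁻¹) - -(a⁻¹ * (c0 + a * (t - t))⁻¹)
      ≤ (a * c0)⁻¹ := by
    have h1 : (1:ℝ) ≤ c0 + a * (T - t) := hglin T htT
    have h2 : c0 + a * (t - t) = c0 := by ring
    rw [h2, mul_inv]
    have h3 : 0 < (c0 + a * (T - t))⁻¹ := by positivity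
    have h4 : 0 < a⁻¹ := by positivity
    nlinarith
  linarith [hJdiff, hmono, hFTC.le, hval]

end basic







lemma exists_c (hq : Continuous q) (hq0 : ∀ s, 0 ≤ q s) :
    ∃ c : ℝ, 0 ≤ c ∧
      (∀ t, 0 ≤ t → 0 < 1 - c * Jfn q t) ∧
      (∀ t, 0 ≤ t → Pfn q t * (1 - c * Jfn q t) ≤ c * (uFun q t)⁻¹) := by
  have hJmono := (Jfn_strictMono hq hq0).monotone
  by_cases hB : BddAbove (Jfn q '' Ici 0)
  · set S := sSup (Jfn q '' Ici 0) with hSdef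
    have hmemJ : ∀ t, 0 ≤ t → Jfn q t ≤ S := fun t ht => le_csSup hB ⟨t, ht, rfl⟩
    have hlt : ∀ t, 0 ≤ t → Jfn q t < S := fun t ht =>
      lt_of_lt_of_le (Jfn_strictMono hq hq0 (lt_add_one t)) (hmemJ (t+1) (by linarith))
    have hS0 : 0 < S := by have := hlt 0 le_rfl; rwa [Jfn_zero] at this
    refine ⟨S⁻¹, by positivity, fun t ht => ?_, fun t ht => ?_⟩
    · have h1 : S⁻¹ * Jfn q t < S⁻¹ * S := mul_lt_mul_of_pos_left (hlt t ht) (by positivity)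
      rw [inv_mul_cancel₀ hS0.ne'] at h1
      linarith
    · rcases (Pfn_nonneg hq hq0 ht).eq_or_lt with hP | hP
      · rw [← hP, zero_mul]
        have := uFun_pos hq hq0 t
        positivity
      · have hkey : S ≤ Jfn q t + (Pfn q t * uFun q t)⁻¹ := by
          refine csSup_le ⟨Jfn q 0, 0, self_mem_Ici, rfl⟩ ?_
          rintro y ⟨T, hT, rfl⟩
          rcases le_total T t with h | h
          · have := hJmono h
            have hpos : 0 < (Pfn q t * uFun q t)⁻¹ := by
              have := uFun_pos hq hq0 t; positivity
            linarith
          · exact Jfn_increment hq hq0 ht h hP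
        have hu := uFun_pos hq hq0 t
        have e1 : 1 - S⁻¹ * Jfn q t = S⁻¹ * (S - Jfn q t) := by field_simp
        rw [e1, mul_left_comm]
        refine mul_le_mul_of_nonneg_left ?_ (by positivity)
        have h2 : S - Jfn q t ≤ (Pfn q t * uFun q t)⁻¹ := by linarith
        calc Pfn q t * (S - Jfn q t) ≤ Pfn q t * (Pfn q t * uFun q t)⁻¹ :=
              mul_le_mul_of_nonneg_left h2 hP.le
          _ = (uFun q t)⁻¹ := by field_simp
  · have hP0 : ∀ t, 0 ≤ t → Pfn q t = 0 := by
      intro t ht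
      by_contra hne
      have hpos : 0 < Pfn q t := (Pfn_nonneg hq hq0 ht).lt_of_ne (Ne.symm hne)
      refine hB ⟨Jfn q t + (Pfn q t * uFun q t)⁻¹, ?_⟩
      rintro y ⟨T, hT, rfl⟩
      rcases le_total T t with h | h
      · have := hJmono h
        have hu := uFun_pos hq hq0 t
        have hpos2 : 0 < (Pfn q t * uFun q t)⁻¹ := by positivity
        linarith
      · exact Jfn_increment hq hq0 ht h hpos
    exact ⟨0, le_rfl, fun t ht => by simp, fun t ht => by rw [hP0 t ht]; simp⟩



end JacobiAux

/-- Existence of the bounded solution of the scalar Jacobi equation `h'' + Kh = 0`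
on `(-∞, 0]` with `h(0) = 1`, `0 < h ≤ 1`, and `h'(0) ≥ 0` (nonpositive potential). -/
theorem stmt_9 (K : ℝ → ℝ)
    (hK : ContinuousOn K (Set.Iic 0))
    (hKneg : ∀ r : ℝ, r ≤ 0 → K r ≤ 0) :
    ∃ h h' h'' : ℝ → ℝ,
      (∀ r : ℝ, r ≤ 0 → HasDerivWithinAt h (h' r) (Set.Iic 0) r) ∧
      (∀ r : ℝ, r ≤ 0 → HasDerivWithinAt h' (h'' r) (Set.Iic 0) r) ∧
      ContinuousOn h'' (Set.Iic 0) ∧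
      (∀ r : ℝ, r ≤ 0 → h'' r + K r * h r = 0) ∧
      h 0 = 1 ∧
      (∀ r : ℝ, r ≤ 0 → 0 < h r ∧ h r ≤ 1) ∧
      0 ≤ h' 0 := by
  set q : ℝ → ℝ := fun t => -K (-(max t 0)) with hqdef
  have hq : Continuous q := by
    refine Continuous.neg ?_
    refine hK.comp_continuous ((continuous_id.max continuous_const).neg) fun x => ?_
    simp only [Set.mem_Iic, neg_nonpos]
    exact le_max_right x 0
  have hq0 : ∀ s, 0 ≤ q s := fun s => by
    simp only [hqdef, neg_nonneg]
    exact hKneg _ (neg_nonpos.2 (le_max_right s 0))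
  obtain ⟨c, hc0, hc1, hc2⟩ := exists_c hq hq0
  set g : ℝ → ℝ := fun t => uFun q t * (1 - c * Jfn q t) with hgdef
  set g1 : ℝ → ℝ := fun t => Pfn q t * (1 - c * Jfn q t) - c * (uFun q t)⁻¹ with hg1def
  have hucont := uFun_continuous hq hq0
  have hJcont : Continuous (Jfn q) := by
    rw [continuous_iff_continuousAt]
    exact fun t => (hasDerivAt_Jfn hq hq0 t).continuousAt
  have hgcont : Continuous g :=
    hucont.mul (continuous_const.sub (continuous_const.mul hJcont))
  have hgderiv : ∀ t, HasDerivAt g (g1 t) t := by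
    intro t
    have h1 := (hasDerivAt_uFun hq hq0 t).mul
      (((hasDerivAt_Jfn hq hq0 t).const_mul c).const_sub 1)
    have hu := uFun_ne hq hq0 t
    refine h1.congr_deriv ?_
    simp only [hg1def]
    field_simp [hu]
    ring
  have hg1deriv : ∀ t, HasDerivAt g1 (q t * g t) t := by
    intro t
    have h1 := ((hasDerivAt_Pfn hq hq0 t).mul
      (((hasDerivAt_Jfn hq hq0 t).const_mul c).const_sub 1)).sub
      (((hasDerivAt_uFun hq hq0 t).inv (uFun_ne hq hq0 t)).const_mul c)
    have hu := uFun_ne hq hq0 t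
    refine h1.congr_deriv ?_
    simp only [hg1def, hgdef]
    field_simp [hu]
    ring
  have hg0 : g 0 = 1 := by simp [hgdef, uFun_zero, Jfn_zero]
  have hg10 : g1 0 = -c := by simp [hg1def, Pfn_zero, Jfn_zero, uFun_zero]
  have hgpos : ∀ t, 0 ≤ t → 0 < g t := fun t ht =>
    mul_pos (uFun_pos hq hq0 t) (hc1 t ht)
  have hganti : AntitoneOn g (Set.Ici 0) := by
    refine antitoneOn_of_deriv_nonpos (convex_Ici 0) hgcont.continuousOn
      (fun t _ => (hgderiv t).differentiableAt.differentiableWithinAt) fun t ht => ?_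
    rw [interior_Ici] at ht
    rw [(hgderiv t).deriv]
    have := hc2 t (le_of_lt ht)
    simp only [hg1def]
    linarith
  have hgle : ∀ t, 0 ≤ t → g t ≤ 1 := fun t ht => by
    have := hganti Set.self_mem_Ici ht ht
    rwa [hg0] at this
  refine ⟨fun r => g (-r), fun r => -g1 (-r), fun r => q (-r) * g (-r), ?_, ?_, ?_, ?_, ?_, ?_, ?_⟩
  · intro r _
    have h1 : HasDerivAt (fun r : ℝ => g (-r)) (g1 (-r) * (-1)) r :=
      (hgderiv (-r)).comp r (hasDerivAt_neg r)
    have h2 : g1 (-r) * (-1) = -g1 (-r) := by ring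
    rw [h2] at h1
    exact h1.hasDerivWithinAt
  · intro r _
    have h1 : HasDerivAt (fun r : ℝ => g1 (-r)) ((q (-r) * g (-r)) * (-1)) r :=
      (hg1deriv (-r)).comp r (hasDerivAt_neg r)
    have h2 := h1.neg
    have h3 : -(q (-r) * g (-r) * (-1)) = q (-r) * g (-r) := by ring
    rw [h3] at h2
    exact h2.hasDerivWithinAt
  · exact ((hq.comp continuous_neg).mul (hgcont.comp continuous_neg)).continuousOn
  · intro r hr
    have hqr : q (-r) = -K r := by
      simp only [hqdef]
      rw [max_eq_left (neg_nonneg.2 hr), neg_neg]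
    show q (-r) * g (-r) + K r * g (-r) = 0
    rw [hqr]
    ring
  · show g (-(0:ℝ)) = 1
    rw [neg_zero, hg0]
  · intro r hr
    exact ⟨hgpos (-r) (neg_nonneg.2 hr), hgle (-r) (neg_nonneg.2 hr)⟩
  · show 0 ≤ -g1 (-(0:ℝ))
    rw [neg_zero, hg10, neg_neg]
    exact hc0
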